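/- Let A be a (not necessarily unital) C*-algebra, 𝒜 ⊆ A a dense *-subalgebra, and L : 𝒜 → [0,∞) a seminorm. Define an extended metric on the set S(A) of states of A by d(σ,τ) := sup{|σ(a) − τ(a)| : a ∈ 𝒜, L(a) ≤ 1} ∈ [0,∞]. Suppose A admits a (contractive, increasing) approximate unit (u_n) contained in 𝒜 with sup_n L(u_n) < ∞. Then (S(A), d) is complete: if (σ_k) is a sequence of states with d(σ_k,σ_l) → 0 as k,l → ∞, then there exists a state σ of A with d(σ_k,σ) → 0. -/

import Mathlib

set_option synthInstance.maxHeartbeats 1000000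
set_option maxHeartbeats 1000000

open Filter Topology
open scoped ComplexOrder ENNReal

/-- A state on a (possibly non-unital) C*-algebra: a positive linear functional of
norm one. -/
def IsState {A : Type*} [NonUnitalCStarAlgebra A] (σ : A →L[ℂ] ℂ) : Prop :=
  ‖σ‖ = 1 ∧ ∀ a : A, 0 ≤ σ (star a * a)

/-- The extended metric `d(σ,τ) = sup {|σ(a) − τ(a)| : a ∈ 𝒜, L(a) ≤ 1}` on states,
valued in `[0,∞]`. -/
noncomputable def stateDist {A : Type*} [NonUnitalCStarAlgebra A]
    (S : NonUnitalSubalgebra ℂ A) (L : S → ℝ) (σ τ : A →L[ℂ] ℂ) : ℝ≥0∞ :=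
  ⨆ a : {a : S // L a ≤ 1}, ENNReal.ofReal ‖σ ((a : S) : A) - τ ((a : S) : A)‖

lemma cs_aux {A : Type*} [NonUnitalCStarAlgebra A] (φ : A →L[ℂ] ℂ)
    (hφ : ∀ a : A, 0 ≤ φ (star a * a)) (x y : A) :
    ‖φ (star x * y)‖ ^ 2 ≤ (φ (star x * x)).re * (φ (star y * y)).re := by
  set z := φ (star x * y) with hz
  set w := φ (star y * x) with hw
  set P := (φ (star x * x)).re with hP'
  set Q := (φ (star y * y)).re with hQ'
  have hP : 0 ≤ P := (Complex.nonneg_iff.mp (hφ x)).1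
  have hQ : 0 ≤ Q := (Complex.nonneg_iff.mp (hφ y)).1
  have expand : ∀ c : ℂ, star (x + c • y) * (x + c • y)
      = star x * x + c • (star x * y) + (starRingEnd ℂ c) • (star y * x)
        + ((starRingEnd ℂ c) * c) • (star y * y) := by
    intro c
    simp only [star_add, star_smul, add_mul, mul_add, smul_mul_assoc, mul_smul_comm, smul_smul, smul_add,
      starRingEnd_apply, mul_comm c (star c)]
    abel
  have key : ∀ c : ℂ, φ (star (x + c • y) * (x + c • y))
      = φ (star x * x) + c * z + (starRingEnd ℂ c) * w
        + ((starRingEnd ℂ c) * c) * φ (star y * y) := by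
    intro c
    rw [expand c]
    simp only [map_add, map_smul, smul_eq_mul]
    rfl
  have himxx : (φ (star x * x)).im = 0 := ((Complex.nonneg_iff.mp (hφ x)).2).symm
  have himyy : (φ (star y * y)).im = 0 := ((Complex.nonneg_iff.mp (hφ y)).2).symm
  have him : ∀ c : ℂ, (c * z).im + ((starRingEnd ℂ c) * w).im = 0 := by
    intro c
    have h0 := ((Complex.nonneg_iff.mp (hφ (x + c • y))).2).symm
    rw [key c] at h0
    have hlast : ((starRingEnd ℂ c) * c * φ (star y * y)).im = 0 := by
      rw [mul_comm (starRingEnd ℂ c) c, Complex.mul_conj, Complex.im_ofReal_mul, himyy, mul_zero]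
    simp only [Complex.add_im, himxx, hlast] at h0
    linarith
  have hwz : w = starRingEnd ℂ z := by
    have h1 := him 1
    have hI := him Complex.I
    simp only [one_mul, map_one] at h1
    simp only [Complex.mul_im, Complex.I_re, Complex.I_im, Complex.conj_I, Complex.neg_im,
      Complex.neg_re, zero_mul, one_mul, mul_one, zero_add, map_neg] at hI
    apply Complex.ext
    · simp only [Complex.conj_re]; linarith
    · simp only [Complex.conj_im]; linarith
  have mc : z * starRingEnd ℂ z = (Complex.normSq z : ℂ) := Complex.mul_conj z
  set nz := Complex.normSq z with hnz
  have hre : ∀ t : ℝ, 0 ≤ P - 2 * t * nz + t ^ 2 * nz * Q := by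
    intro t
    set c : ℂ := -(t : ℂ) * starRingEnd ℂ z with hc
    have h0 := (Complex.nonneg_iff.mp (hφ (x + c • y))).1
    rw [key c] at h0
    have e1 : c * z = ((-(t * nz) : ℝ) : ℂ) := by
      push_cast [hnz, ← mc, hc]; rw [← Complex.mul_conj]; ring
    have e2 : (starRingEnd ℂ c) * w = ((-(t * nz) : ℝ) : ℂ) := by
      rw [hwz]
      push_cast [hnz, ← mc, hc, map_mul, map_neg, Complex.conj_conj, Complex.conj_ofReal]
      rw [← Complex.mul_conj]
      ring
    have e3 : (starRingEnd ℂ c) * c = ((t ^ 2 * nz : ℝ) : ℂ) := by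
      push_cast [hnz, ← mc, hc, map_mul, map_neg, Complex.conj_conj, Complex.conj_ofReal]
      rw [← Complex.mul_conj]
      ring
    rw [e1, e2, e3] at h0
    simp only [Complex.add_re, Complex.ofReal_re, Complex.re_ofReal_mul] at h0
    rw [← hP'] at h0
    rw [← hQ'] at h0
    linarith
  have hzsq : ‖z‖ ^ 2 = nz := by
    rw [hnz]
    exact Complex.sq_norm z ▸ rfl
  rw [hzsq]
  rcases eq_or_lt_of_le (Complex.normSq_nonneg z) with hz0 | hz0
  · rw [← hnz] at hz0
    rw [← hz0]
    positivity
  · rw [← hnz] at hz0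
    rcases eq_or_lt_of_le hQ with hQ0 | hQ0
    · exfalso
      have h1 := hre ((P + 1) / (2 * nz))
      rw [← hQ0] at h1
      have h2 : (P + 1) / (2 * nz) * nz = (P + 1) / 2 := by field_simp
      nlinarith [h2]
    · have h1 := hre (1 / Q)
      have h2 : 1 / Q * Q = 1 := one_div_mul_cancel hQ0.ne'
      have h3 : 0 ≤ (P - 2 * (1 / Q) * nz + (1 / Q) ^ 2 * nz * Q) * Q := mul_nonneg h1 hQ0.le
      have h4 : (P - 2 * (1 / Q) * nz + (1 / Q) ^ 2 * nz * Q) * Q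
          = P * Q - 2 * nz * (1 / Q * Q) + nz * (1 / Q * Q) ^ 2 := by ring
      rw [h4, h2] at h3
      nlinarith

/-- Let `A` be a C*-algebra, `𝒜 ⊆ A` a dense *-subalgebra and
`L : 𝒜 → [0,∞)` a seminorm.  Define the extended metric
`d(σ,τ) := sup {|σ(a) − τ(a)| : a ∈ 𝒜, L(a) ≤ 1}` on the states of `A`.  If `A` admits a
contractive increasing approximate unit `(u_n)` contained in `𝒜` with `sup_n L(u_n) < ∞`,
then `(S(A), d)` is complete: every `d`-Cauchy sequence of states `d`-converges to a
state. -/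
theorem statement10 {A : Type*} [NonUnitalCStarAlgebra A]
    [PartialOrder A] [StarOrderedRing A]
    -- the dense *-subalgebra 𝒜
    (S : NonUnitalSubalgebra ℂ A) (hSstar : ∀ a ∈ S, star a ∈ S)
    (hSdense : Dense (S : Set A))
    -- the seminorm L on 𝒜 with values in [0,∞)
    (L : S → ℝ) (hL0 : ∀ a : S, 0 ≤ L a)
    (hLsmul : ∀ (c : ℂ) (a : S), L (c • a) = ‖c‖ * L a)
    (hLadd : ∀ a b : S, L (a + b) ≤ L a + L b)
    -- the contractive increasing approximate unit contained in 𝒜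
    (u : ℕ → S)
    (hu_pos : ∀ n, (0 : A) ≤ (u n : A))
    (hu_contr : ∀ n, ‖(u n : A)‖ ≤ 1)
    (hu_incr : Monotone fun n => ((u n : S) : A))
    (hu_approx : ∀ a : A, Tendsto (fun n => ‖(u n : A) * a - a‖) atTop (𝓝 0))
    (huL : ∃ C : ℝ, ∀ n, L (u n) ≤ C) :
    ∀ σ : ℕ → A →L[ℂ] ℂ, (∀ k, IsState (σ k)) →
      (∀ ε : ℝ≥0∞, 0 < ε → ∃ N : ℕ, ∀ k ≥ N, ∀ l ≥ N, stateDist S L (σ k) (σ l) < ε) →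
      ∃ τ : A →L[ℂ] ℂ, IsState τ ∧ Tendsto (fun k => stateDist S L (σ k) τ) atTop (𝓝 0) := by
  intro σ hstate hC
  obtain ⟨C, hCL⟩ := huL
  have hC0 : 0 ≤ C := le_trans (hL0 (u 0)) (hCL 0)
  have hnorm : ∀ k, ‖σ k‖ = 1 := fun k => (hstate k).1
  have hposk : ∀ k a, 0 ≤ σ k (star a * a) := fun k => (hstate k).2
  -- pointwise bounds extracted from `stateDist`
  have pt_le : ∀ (φ ψ : A →L[ℂ] ℂ) (a : S), L a ≤ 1 →
      ENNReal.ofReal ‖φ (a : A) - ψ (a : A)‖ ≤ stateDist S L φ ψ := fun φ ψ a ha =>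
    le_iSup (fun b : {b : S // L b ≤ 1} =>
      ENNReal.ofReal ‖φ ((b : S) : A) - ψ ((b : S) : A)‖) ⟨a, ha⟩
  have pt_lt : ∀ (φ ψ : A →L[ℂ] ℂ) (ε : ℝ), 0 < ε → stateDist S L φ ψ < ENNReal.ofReal ε →
      ∀ a : S, L a ≤ 1 → ‖φ (a : A) - ψ (a : A)‖ < ε := by
    intro φ ψ ε hε h a ha
    exact (ENNReal.ofReal_lt_ofReal_iff hε).mp (lt_of_le_of_lt (pt_le φ ψ a ha) h)
  have pt_all : ∀ (φ ψ : A →L[ℂ] ℂ) (ε : ℝ), 0 < ε → stateDist S L φ ψ < ENNReal.ofReal ε →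
      ∀ b : S, ‖φ (b : A) - ψ (b : A)‖ ≤ (L b + 1) * ε := by
    intro φ ψ ε hε h b
    have hc : (0 : ℝ) < L b + 1 := by linarith [hL0 b]
    set b' : S := (((L b + 1 : ℝ) : ℂ))⁻¹ • b with hb'
    have hnc : ‖(((L b + 1 : ℝ) : ℂ))⁻¹‖ = (L b + 1)⁻¹ := by
      rw [norm_inv, Complex.norm_real, Real.norm_of_nonneg hc.le]
    have hLb' : L b' ≤ 1 := by
      rw [hb', hLsmul, hnc, inv_mul_le_iff₀ hc]
      linarith
    have key := pt_lt φ ψ ε hε h b' hLb'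
    have hcoe : ((b' : S) : A) = (((L b + 1 : ℝ) : ℂ))⁻¹ • (b : A) := rfl
    have hdiff : φ ((b' : S) : A) - ψ ((b' : S) : A)
        = (((L b + 1 : ℝ) : ℂ))⁻¹ * (φ (b : A) - ψ (b : A)) := by
      rw [hcoe, map_smul, map_smul, smul_eq_mul, smul_eq_mul]
      ring
    rw [hdiff, norm_mul, hnc, inv_mul_lt_iff₀ hc] at key
    linarith
  -- pointwise Cauchy
  have cauchy_pt : ∀ a : A, CauchySeq fun k => σ k a := by
    intro a
    rw [Metric.cauchySeq_iff]
    intro ε hε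
    obtain ⟨b, hbS, hab⟩ := Metric.mem_closure_iff.mp (hSdense a) (ε / 4) (by linarith)
    set b' : S := ⟨b, hbS⟩ with hb'
    have hδ : (0 : ℝ) < ε / (4 * (L b' + 1)) := by
      have := hL0 b'; positivity
    obtain ⟨N, hN⟩ := hC (ENNReal.ofReal (ε / (4 * (L b' + 1)))) (ENNReal.ofReal_pos.mpr hδ)
    refine ⟨N, fun k hk l hl => ?_⟩
    have h1 := pt_all (σ k) (σ l) _ hδ (hN k hk l hl) b'
    have h2 : (L b' + 1) * (ε / (4 * (L b' + 1))) = ε / 4 := by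
      have : L b' + 1 ≠ 0 := by have := hL0 b'; positivity
      field_simp
    rw [h2] at h1
    have hab' : ‖a - b‖ < ε / 4 := by rwa [← dist_eq_norm]
    have e1 : ‖σ k a - σ k b‖ ≤ ‖a - b‖ := by
      rw [← map_sub]
      calc ‖σ k (a - b)‖ ≤ ‖σ k‖ * ‖a - b‖ := (σ k).le_opNorm _
        _ = ‖a - b‖ := by rw [hnorm k, one_mul]
    have e2 : ‖σ l a - σ l b‖ ≤ ‖a - b‖ := by
      rw [← map_sub]
      calc ‖σ l (a - b)‖ ≤ ‖σ l‖ * ‖a - b‖ := (σ l).le_opNorm _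
        _ = ‖a - b‖ := by rw [hnorm l, one_mul]
    rw [dist_eq_norm]
    have : ‖σ k a - σ l a‖ ≤ ‖σ k a - σ k b‖ + ‖σ k b - σ l b‖ + ‖σ l b - σ l a‖ := by
      have := norm_add₃_le (a := σ k a - σ k b) (b := σ k b - σ l b) (c := σ l b - σ l a)
      simpa using this
    rw [norm_sub_rev] at e2
    have hb'' : ((b' : S) : A) = b := rfl
    rw [hb''] at h1
    linarith
  -- the limit functional
  set T := fun a : A => limUnder atTop fun k => σ k a with hT
  have hlim : ∀ a : A, Tendsto (fun k => σ k a) atTop (𝓝 (T a)) := fun a =>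
    (cauchy_pt a).tendsto_limUnder
  have hTbound : ∀ a : A, ‖T a‖ ≤ 1 * ‖a‖ := by
    intro a
    refine le_of_tendsto (hlim a).norm (Eventually.of_forall fun k => ?_)
    calc ‖σ k a‖ ≤ ‖σ k‖ * ‖a‖ := (σ k).le_opNorm a
      _ = 1 * ‖a‖ := by rw [hnorm k]
  set τ : A →L[ℂ] ℂ := LinearMap.mkContinuous
    { toFun := T
      map_add' := fun a b => tendsto_nhds_unique
        (by simpa [map_add] using hlim (a + b)) ((hlim a).add (hlim b))
      map_smul' := fun c a => tendsto_nhds_unique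
        (by simpa [map_smul] using hlim (c • a)) ((hlim a).const_mul c) }
    1 hTbound with hτ
  have hτapp : ∀ a : A, τ a = T a := fun a => rfl
  have hτlim : ∀ a : A, Tendsto (fun k => σ k a) atTop (𝓝 (τ a)) := fun a => hlim a
  -- the uniform estimate for the limit
  have tau_est : ∀ (e : ℝ), 0 < e → ∀ N : ℕ,
      (∀ k ≥ N, ∀ l ≥ N, stateDist S L (σ k) (σ l) < ENNReal.ofReal e) →
      ∀ k ≥ N, ∀ b : S, ‖σ k (b : A) - τ (b : A)‖ ≤ (L b + 1) * e := by
    intro e he N hN k hk b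
    have ht : Tendsto (fun l => ‖σ k (b : A) - σ l (b : A)‖) atTop
        (𝓝 ‖σ k (b : A) - τ (b : A)‖) := (Tendsto.const_sub _ (hτlim (b : A))).norm
    refine le_of_tendsto ht ?_
    filter_upwards [eventually_ge_atTop N] with l hl
    exact pt_all (σ k) (σ l) e he (hN k hk l hl) b
  -- positivity of τ
  have hτpos : ∀ a : A, 0 ≤ τ (star a * a) := by
    intro a
    rw [Complex.nonneg_iff]
    constructor
    · have h1 : Tendsto (fun k => (σ k (star a * a)).re) atTop (𝓝 (τ (star a * a)).re) :=
        (Complex.continuous_re.tendsto _).comp (hτlim _)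
      exact le_of_tendsto_of_tendsto' tendsto_const_nhds h1 fun k =>
        (Complex.nonneg_iff.mp (hposk k a)).1
    · have h2 : Tendsto (fun k => (σ k (star a * a)).im) atTop (𝓝 (τ (star a * a)).im) :=
        (Complex.continuous_im.tendsto _).comp (hτlim _)
      have h3 : (fun k => (σ k (star a * a)).im) = fun _ => (0 : ℝ) :=
        funext fun k => ((Complex.nonneg_iff.mp (hposk k a)).2).symm
      rw [h3] at h2
      exact tendsto_nhds_unique tendsto_const_nhds h2
  -- norm of τ is at most one
  have hτle : ‖τ‖ ≤ 1 := LinearMap.mkContinuous_norm_le _ zero_le_one _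
  -- norm of τ is at least one
  have hτge : ∀ ε : ℝ, 0 < ε → ε < 1 → 1 - 3 * ε ≤ ‖τ‖ := by
    intro ε hε hε1
    have hC1 : (0 : ℝ) < C + 1 := by linarith
    have hδ : (0 : ℝ) < ε / (C + 1) := by positivity
    obtain ⟨N, hN⟩ := hC (ENNReal.ofReal (ε / (C + 1))) (ENNReal.ofReal_pos.mpr hδ)
    -- τ is uniformly close to σ N on all the u n
    have hun : ∀ n : ℕ, ‖σ N ((u n : A)) - τ ((u n : A))‖ ≤ ε := by
      intro n
      have h1 := tau_est _ hδ N hN N le_rfl (u n)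
      calc ‖σ N ((u n : A)) - τ ((u n : A))‖ ≤ (L (u n) + 1) * (ε / (C + 1)) := h1
        _ ≤ (C + 1) * (ε / (C + 1)) :=
            mul_le_mul_of_nonneg_right (by linarith [hCL n]) hδ.le
        _ = ε := by field_simp
    -- choose a norm-attaining element for σ N
    have hex : ∃ a : A, ‖a‖ ≤ 1 ∧ 1 - ε / 2 < ‖σ N a‖ := by
      by_contra hcon
      push_neg at hcon
      have hb : ‖σ N‖ ≤ 1 - ε / 2 := by
        refine ContinuousLinearMap.opNorm_le_bound _ (by linarith) fun a => ?_
        rcases eq_or_ne a 0 with rfl | ha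
        · simp
        · have hna : (0 : ℝ) < ‖a‖ := norm_pos_iff.mpr ha
          have hunit : ‖((‖a‖⁻¹ : ℝ) : ℂ) • a‖ = 1 := by
            rw [norm_smul, Complex.norm_real, Real.norm_of_nonneg (by positivity),
              inv_mul_cancel₀ hna.ne']
          have h2 := hcon (((‖a‖⁻¹ : ℝ) : ℂ) • a) hunit.le
          rw [map_smul, smul_eq_mul, norm_mul, Complex.norm_real,
            Real.norm_of_nonneg (by positivity)] at h2
          calc ‖σ N a‖ = ‖a‖ * (‖a‖⁻¹ * ‖σ N a‖) := (mul_inv_cancel_left₀ hna.ne' _).symm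
            _ ≤ ‖a‖ * (1 - ε / 2) := mul_le_mul_of_nonneg_left h2 hna.le
            _ = (1 - ε / 2) * ‖a‖ := mul_comm _ _
      rw [hnorm N] at hb
      linarith
    obtain ⟨a, ha1, ha2⟩ := hex
    -- push through the approximate unit
    have happrox : Tendsto (fun n => σ N ((u n : A) * a)) atTop (𝓝 (σ N a)) := by
      rw [tendsto_iff_norm_sub_tendsto_zero]
      refine squeeze_zero (fun n => norm_nonneg _) (fun n => ?_) (hu_approx a)
      rw [← map_sub]
      calc ‖σ N ((u n : A) * a - a)‖ ≤ ‖σ N‖ * ‖(u n : A) * a - a‖ := (σ N).le_opNorm _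
        _ = ‖(u n : A) * a - a‖ := by rw [hnorm N, one_mul]
    have hev : ∀ᶠ n in atTop, 1 - ε < ‖σ N ((u n : A) * a)‖ :=
      happrox.norm.eventually (eventually_gt_nhds (by linarith))
    obtain ⟨n, hn⟩ := hev.exists
    set v : A := (u n : A) with hv
    -- Cauchy–Schwarz with the square root of v
    set s : A := CFC.sqrt v with hs
    have hss : s * s = v := CFC.sqrt_mul_sqrt_self v (hu_pos n)
    have hs_sa : star s = s := (IsSelfAdjoint.of_nonneg (CFC.sqrt_nonneg v)).star_eq
    have hsnorm : ‖s‖ ≤ 1 := by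
      have h1 : ‖s‖ * ‖s‖ = ‖v‖ := by
        rw [← hss]
        calc ‖s‖ * ‖s‖ = ‖star s * s‖ := (CStarRing.norm_star_mul_self).symm
          _ = ‖s * s‖ := by rw [hs_sa]
      nlinarith [hu_contr n, norm_nonneg s]
    have hva : v * a = star s * (s * a) := by rw [hs_sa, ← mul_assoc, hss]
    have hcs := cs_aux (σ N) (hposk N) s (s * a)
    rw [hs_sa, hss] at hcs
    -- bound the second factor by one
    have hM1 : (σ N (star (s * a) * (s * a))).re ≤ 1 := by
      have h1 : (σ N (star (s * a) * (s * a))).re ≤ ‖σ N (star (s * a) * (s * a))‖ := by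
        exact Complex.re_le_norm _
      have h2 : ‖σ N (star (s * a) * (s * a))‖ ≤ ‖star (s * a) * (s * a)‖ := by
        calc ‖σ N (star (s * a) * (s * a))‖ ≤ ‖σ N‖ * ‖star (s * a) * (s * a)‖ :=
            (σ N).le_opNorm _
          _ = ‖star (s * a) * (s * a)‖ := by rw [hnorm N, one_mul]
      have h3 : ‖star (s * a) * (s * a)‖ = ‖s * a‖ * ‖s * a‖ := CStarRing.norm_star_mul_self
      have h4 : ‖s * a‖ ≤ 1 := by
        calc ‖s * a‖ ≤ ‖s‖ * ‖a‖ := norm_mul_le s a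
          _ ≤ 1 := by nlinarith [norm_nonneg s, norm_nonneg a]
      nlinarith [norm_nonneg (s * a)]
    have hM0 : 0 ≤ (σ N (star (s * a) * (s * a))).re :=
      (Complex.nonneg_iff.mp (hposk N (s * a))).1
    have hp0 : 0 ≤ (σ N v).re := by
      have := (Complex.nonneg_iff.mp (hposk N s)).1
      rwa [hs_sa, hss] at this
    -- conclude (σ N v).re is close to 1
    have hnv : ‖σ N (v * a)‖ ^ 2 ≤ (σ N v).re := by
      rw [hva, hs_sa]
      nlinarith [hcs, hM1, hM0, hp0]
    have h5 : (1 - ε) ^ 2 ≤ (σ N v).re := by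
      nlinarith [hn, norm_nonneg (σ N (v * a))]
    -- transfer to τ
    have h6 : (σ N v - τ v).re ≤ ε := by
      calc (σ N v - τ v).re ≤ ‖σ N v - τ v‖ := by
            exact Complex.re_le_norm _
        _ ≤ ε := hun n
    have h7 : 1 - 3 * ε ≤ (τ v).re := by
      have : (σ N v - τ v).re = (σ N v).re - (τ v).re := by simp [Complex.sub_re]
      nlinarith
    have h8 : (τ v).re ≤ ‖τ‖ := by
      calc (τ v).re ≤ ‖τ v‖ := by exact Complex.re_le_norm _
        _ ≤ ‖τ‖ * ‖v‖ := τ.le_opNorm v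
        _ ≤ ‖τ‖ * 1 := mul_le_mul_of_nonneg_left (hu_contr n) (norm_nonneg τ)
        _ = ‖τ‖ := mul_one _
    linarith
  have hτnorm : ‖τ‖ = 1 := by
    refine le_antisymm hτle ?_
    by_contra hlt
    push_neg at hlt
    have h0 : 0 ≤ ‖τ‖ := norm_nonneg τ
    have hε : (0 : ℝ) < (1 - ‖τ‖) / 4 := by linarith
    have hε1 : (1 - ‖τ‖) / 4 < 1 := by linarith
    have := hτge _ hε hε1
    linarith
  -- convergence in stateDist
  refine ⟨τ, ⟨hτnorm, hτpos⟩, ?_⟩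
  rw [ENNReal.tendsto_nhds_zero]
  intro ε hε
  set e' : ℝ≥0∞ := min 1 ε with he'
  have he'0 : 0 < e' := lt_min one_pos hε
  have he'top : e' ≠ ⊤ := by
    simp [he']
  set e : ℝ := e'.toReal with he
  have he0 : 0 < e := ENNReal.toReal_pos he'0.ne' he'top
  obtain ⟨N, hN⟩ := hC (ENNReal.ofReal (e / 4)) (ENNReal.ofReal_pos.mpr (by linarith))
  filter_upwards [eventually_ge_atTop N] with k hk
  have hbound : stateDist S L (σ k) τ ≤ ENNReal.ofReal (e / 2) := by
    refine iSup_le fun b => ?_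
    have h1 := tau_est _ (by linarith : (0:ℝ) < e / 4) N hN k hk (b : S)
    have h2 : ‖σ k ((b : S) : A) - τ ((b : S) : A)‖ ≤ e / 2 := by
      have hLb := b.2
      calc ‖σ k ((b : S) : A) - τ ((b : S) : A)‖ ≤ (L (b : S) + 1) * (e / 4) := h1
        _ ≤ 2 * (e / 4) := by
            have := hL0 (b : S)
            nlinarith
        _ = e / 2 := by ring
    exact ENNReal.ofReal_le_ofReal h2
  calc stateDist S L (σ k) τ ≤ ENNReal.ofReal (e / 2) := hbound
    _ ≤ ENNReal.ofReal e := ENNReal.ofReal_le_ofReal (by linarith)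
    _ = e' := ENNReal.ofReal_toReal he'top
    _ ≤ ε := min_le_right 1 ε
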